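/- Let g be a complex number, let λ > 0 and γ be reals with γ ≥ λ and 1 + λ·g ≠ 0, and set α = Re(λ·g). If α > −1/2, then |(1 + γ·g)/(1 + λ·g)| ≤ γ/λ. -/

import Mathlib

/-- If `α = Re(λ·g) > -1/2` and `γ ≥ λ > 0`, then
`|(1 + γ·g)/(1 + λ·g)| ≤ γ/λ` (the modulus is at most the steady-state
gain `γ/λ`). -/
theorem Z_gain_le_dc_of_alpha_gt_neg_half
    (g : ℂ) (lam gam : ℝ) (hlam : 0 < lam) (hgam : lam ≤ gam)
    (hne : 1 + (lam : ℂ) * g ≠ 0)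
    (hα : -(1 / 2) < ((lam : ℂ) * g).re) :
    ‖(1 + (gam : ℂ) * g) / (1 + (lam : ℂ) * g)‖ ≤ gam / lam := by
  have habs : 0 < ‖1 + (lam : ℂ) * g‖ := by
    simpa [norm_pos_iff] using hne
  rw [norm_div, div_le_div_iff₀ habs hlam]
  have key : (‖1 + (gam : ℂ) * g‖ * lam) ^ 2 ≤
      (gam * ‖1 + (lam : ℂ) * g‖) ^ 2 := by
    have hre : -(1/2) < lam * g.re := by
      simpa [Complex.mul_re] using hα
    have h1 : ‖1 + (gam : ℂ) * g‖ ^ 2 =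
        1 + 2 * gam * g.re + gam ^ 2 * (g.re ^ 2 + g.im ^ 2) := by
      rw [Complex.sq_norm, Complex.normSq_apply]
      simp [Complex.add_re, Complex.add_im, Complex.mul_re, Complex.mul_im]
      ring
    have h2 : ‖1 + (lam : ℂ) * g‖ ^ 2 =
        1 + 2 * lam * g.re + lam ^ 2 * (g.re ^ 2 + g.im ^ 2) := by
      rw [Complex.sq_norm, Complex.normSq_apply]
      simp [Complex.add_re, Complex.add_im, Complex.mul_re, Complex.mul_im]
      ring
    rw [mul_pow, mul_pow, h1, h2]
    nlinarith [sq_nonneg g.im, sq_nonneg g.re, sq_nonneg (gam - lam),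
      mul_nonneg (sub_nonneg.2 hgam) (le_of_lt (by nlinarith : (0:ℝ) < gam + lam + 2 * gam * (lam * g.re))),
      sq_nonneg ((gam - lam) * g.im), sq_nonneg ((gam - lam) * g.re)]
  have h0 : 0 ≤ gam * ‖1 + (lam : ℂ) * g‖ :=
    mul_nonneg (hlam.trans_le hgam).le (norm_nonneg _)
  exact le_of_pow_le_pow_left₀ two_ne_zero h0 key
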